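/- Let y = R·d and ŷ = R̂·d̂ with ‖d‖₂ = 1 and R, R̂ > 0. If the uncertainty score u = R̂·|‖d̂‖₂ − 1| satisfies u > |R̂ − R|·c for some c ≥ 1 where |R̂ − R| ≤ R̂‖d̂ − d‖₂/c, then ‖ŷ − y‖₂ ≥ u·(1 − 1/c); hence whenever the magnitude error is small relative to the directional error, large u forces a large prediction error. -/

import Mathlib

theorem stmt4 (D : ℕ) (d dhat : EuclideanSpace ℝ (Fin D)) (R Rhat c : ℝ)
    (hd : ‖d‖ = 1) (hR : 0 < R) (hRhat : 0 < Rhat) (hc : 1 ≤ c)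
    (hu : Rhat * |‖dhat‖ - 1| > |Rhat - R| * c)
    (heR : |Rhat - R| ≤ Rhat * ‖dhat - d‖ / c) :
    ‖Rhat • dhat - R • d‖ ≥ (Rhat * |‖dhat‖ - 1|) * (1 - 1 / c) := by
  have hc0 : (0:ℝ) < c := lt_of_lt_of_le one_pos hc
  have hdir : |‖dhat‖ - 1| ≤ ‖dhat - d‖ := by
    have := abs_norm_sub_norm_le dhat d
    rwa [hd] at this
  have hkey : Rhat • dhat - R • d = Rhat • (dhat - d) + (Rhat - R) • d := by
    rw [smul_sub, sub_smul]; abel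
  have h1 : ‖Rhat • dhat - R • d‖ ≥ Rhat * ‖dhat - d‖ - |Rhat - R| := by
    rw [hkey]
    calc ‖Rhat • (dhat - d) + (Rhat - R) • d‖
        ≥ ‖Rhat • (dhat - d)‖ - ‖(Rhat - R) • d‖ := by
          have := norm_add_le (Rhat • (dhat - d) + (Rhat - R) • d) (-((Rhat - R) • d))
          simp only [add_neg_cancel_right, norm_neg] at this
          linarith
      _ = Rhat * ‖dhat - d‖ - |Rhat - R| := by
          rw [norm_smul, norm_smul, hd, Real.norm_eq_abs, Real.norm_eq_abs,
            abs_of_pos hRhat, mul_one]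
  have h2 : Rhat * ‖dhat - d‖ - |Rhat - R| ≥ Rhat * ‖dhat - d‖ * (1 - 1/c) := by
    have : Rhat * ‖dhat - d‖ * (1 - 1/c) = Rhat * ‖dhat - d‖ - Rhat * ‖dhat - d‖ / c := by
      field_simp
    rw [this]
    linarith
  have h3 : Rhat * ‖dhat - d‖ * (1 - 1/c) ≥ (Rhat * |‖dhat‖ - 1|) * (1 - 1/c) := by
    have h1c : 0 ≤ 1 - 1/c := by
      rw [sub_nonneg]; exact div_le_one_of_le₀ hc hc0.le
    have : Rhat * |‖dhat‖ - 1| ≤ Rhat * ‖dhat - d‖ :=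
      mul_le_mul_of_nonneg_left hdir hRhat.le
    exact mul_le_mul_of_nonneg_right this h1c
  linarith
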